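/- Let Ω ⊂ ℝⁿ be a bounded open convex set, F a Finsler norm with polar F°, and p > 1. Define r^F_max(Ω) = max{F°(x) : x ∈ cl(Ω)}, M_F(Ω) = ∫_{∂Ω} (F°)^p F(ν) dH^{n-1}, P_F(Ω) = ∫_{∂Ω} F(ν) dH^{n-1}. Then M_F(Ω)/P_F(Ω) ≤ (r^F_max(Ω))^p, with equality if and only if Ω is a Wulff shape {F° < r} centered at the origin. -/

import Mathlib

open MeasureTheory Metric Set Module
open scoped ENNReal NNReal RealInnerProductSpace

noncomputable def polar {E : Type*} [NormedAddCommGroup E] [InnerProductSpace ℝ E]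
    (F : E → ℝ) (v : E) : ℝ :=
  ⨆ ξ : {ξ : E // ξ ≠ 0}, (inner ℝ (ξ : E) v : ℝ) / F (ξ : E)

set_option linter.unusedSectionVars false
set_option linter.unusedVariables false

section PolarLemmas

variable {E : Type*} [NormedAddCommGroup E] [InnerProductSpace ℝ E]
variable {F : E → ℝ} {a : ℝ}

lemma Fpos (ha : 0 < a) (hlow : ∀ ξ, a * ‖ξ‖ ≤ F ξ) {ξ : E} (hξ : ξ ≠ 0) : 0 < F ξ :=
  lt_of_lt_of_le (mul_pos ha (norm_pos_iff.2 hξ)) (hlow ξ)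

lemma Fzero (hhom : ∀ (t : ℝ) (ξ : E), F (t • ξ) = |t| * F ξ) : F 0 = 0 := by
  have := hhom 0 0
  simpa using this

lemma Fneg (hhom : ∀ (t : ℝ) (ξ : E), F (t • ξ) = |t| * F ξ) (x : E) : F (-x) = F x := by
  have := hhom (-1) x
  simpa using this

lemma Fsub (hconv : ConvexOn ℝ Set.univ F)
    (hhom : ∀ (t : ℝ) (ξ : E), F (t • ξ) = |t| * F ξ) (x y : E) :
    F (x + y) ≤ F x + F y := by
  have h := hconv.2 (Set.mem_univ x) (Set.mem_univ y)
    (by norm_num : (0:ℝ) ≤ 1/2) (by norm_num : (0:ℝ) ≤ 1/2) (by norm_num)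
  have h2 : (1/2 : ℝ) • x + (1/2 : ℝ) • y = (1/2 : ℝ) • (x + y) := by
    rw [smul_add]
  rw [h2, hhom] at h
  rw [abs_of_pos (by norm_num : (0:ℝ) < 1/2)] at h
  simp only [smul_eq_mul] at h
  linarith

lemma key_bound (ha : 0 < a) (hlow : ∀ ξ, a * ‖ξ‖ ≤ F ξ) {ξ : E} (hξ : ξ ≠ 0) (v : E) :
    (inner ℝ ξ v : ℝ) / F ξ ≤ ‖v‖ / a := by
  have hξn : 0 < ‖ξ‖ := norm_pos_iff.2 hξ
  have h1 : (inner ℝ ξ v : ℝ) ≤ ‖ξ‖ * ‖v‖ := real_inner_le_norm ξ v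
  have h2 : (0:ℝ) < a * ‖ξ‖ := by positivity
  calc (inner ℝ ξ v : ℝ) / F ξ ≤ (‖ξ‖ * ‖v‖) / (a * ‖ξ‖) :=
        div_le_div₀ (by positivity) h1 h2 (hlow ξ)
    _ = ‖v‖ / a := by field_simp

variable [Nonempty {ξ : E // ξ ≠ 0}]

lemma polar_bdd (ha : 0 < a) (hlow : ∀ ξ, a * ‖ξ‖ ≤ F ξ) (v : E) :
    BddAbove (Set.range fun ξ : {ξ : E // ξ ≠ 0} => (inner ℝ (ξ : E) v : ℝ) / F (ξ : E)) := by
  refine ⟨‖v‖ / a, ?_⟩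
  rintro x ⟨ξ, rfl⟩
  exact key_bound ha hlow ξ.2 v

lemma le_polar (ha : 0 < a) (hlow : ∀ ξ, a * ‖ξ‖ ≤ F ξ) {ξ : E} (hξ : ξ ≠ 0) (v : E) :
    (inner ℝ ξ v : ℝ) / F ξ ≤ polar F v :=
  le_ciSup (polar_bdd ha hlow v) ⟨ξ, hξ⟩

lemma polar_le (ha : 0 < a) (hlow : ∀ ξ, a * ‖ξ‖ ≤ F ξ) (v : E) :
    polar F v ≤ ‖v‖ / a :=
  ciSup_le fun ξ => key_bound ha hlow ξ.2 v

lemma polar_nonneg (ha : 0 < a) (hlow : ∀ ξ, a * ‖ξ‖ ≤ F ξ)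
    (hhom : ∀ (t : ℝ) (ξ : E), F (t • ξ) = |t| * F ξ) (v : E) : 0 ≤ polar F v := by
  obtain ⟨ξ⟩ := ‹Nonempty {ξ : E // ξ ≠ 0}›
  have h1 : (inner ℝ (ξ:E) v : ℝ) / F ξ ≤ polar F v := le_polar ha hlow ξ.2 v
  have h2 : (inner ℝ (-(ξ:E)) v : ℝ) / F (-(ξ:E)) ≤ polar F v :=
    le_polar ha hlow (neg_ne_zero.2 ξ.2) v
  rw [inner_neg_left, Fneg hhom] at h2
  rw [neg_div] at h2
  rcases le_total 0 ((inner ℝ (ξ:E) v : ℝ) / F ξ) with h | h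
  · linarith
  · linarith

lemma polar_zero (ha : 0 < a) (hlow : ∀ ξ, a * ‖ξ‖ ≤ F ξ) : polar F (0 : E) = 0 := by
  unfold polar
  have : ∀ ξ : {ξ : E // ξ ≠ 0}, (inner ℝ (ξ : E) (0:E) : ℝ) / F (ξ : E) = 0 := by
    intro ξ; rw [inner_zero_right]; simp
  rw [iSup_congr this]
  exact ciSup_const

lemma polar_smul (ha : 0 < a) (hlow : ∀ ξ, a * ‖ξ‖ ≤ F ξ) {t : ℝ} (ht : 0 ≤ t) (v : E) :
    polar F (t • v) = t * polar F v := by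
  rcases eq_or_lt_of_le ht with h | h
  · rw [← h, zero_smul, polar_zero ha hlow, zero_mul]
  · unfold polar
    have : ∀ ξ : {ξ : E // ξ ≠ 0}, (inner ℝ (ξ : E) (t • v) : ℝ) / F (ξ : E)
        = t * ((inner ℝ (ξ : E) v : ℝ) / F (ξ : E)) := by
      intro ξ
      rw [real_inner_smul_right]
      ring
    rw [iSup_congr this, Real.mul_iSup_of_nonneg ht]

lemma polar_sub_le (ha : 0 < a) (hlow : ∀ ξ, a * ‖ξ‖ ≤ F ξ) (u v : E) :
    polar F u ≤ polar F v + ‖u - v‖ / a := by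
  apply ciSup_le
  intro ξ
  have h1 : (inner ℝ (ξ:E) u : ℝ) = inner ℝ (ξ:E) v + inner ℝ (ξ:E) (u - v) := by
    rw [← inner_add_right]
    norm_num
  rw [h1, add_div]
  exact add_le_add (le_polar ha hlow ξ.2 v) (key_bound ha hlow ξ.2 (u - v))

lemma polar_lipschitz (ha : 0 < a) (hlow : ∀ ξ, a * ‖ξ‖ ≤ F ξ) :
    LipschitzWith (1/a).toNNReal (polar F) := by
  apply LipschitzWith.of_dist_le_mul
  intro u v
  rw [Real.dist_eq, abs_sub_le_iff]
  have h1 := polar_sub_le ha hlow (F := F) u v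
  have h2 := polar_sub_le ha hlow (F := F) v u
  have hc : ((1/a).toNNReal : ℝ) = 1/a := Real.coe_toNNReal _ (by positivity)
  rw [hc]
  have hd : dist u v = ‖u - v‖ := dist_eq_norm u v
  have hd' : dist v u = ‖v - u‖ := dist_eq_norm v u
  have hev : ‖v - u‖ = ‖u - v‖ := norm_sub_rev v u
  rw [hev] at h2
  have hq : ‖u - v‖ / a = 1/a * ‖u - v‖ := by ring
  constructor
  · rw [hd]; linarith
  · rw [hd]; linarith

lemma polar_continuous (ha : 0 < a) (hlow : ∀ ξ, a * ‖ξ‖ ≤ F ξ) :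
    Continuous (polar F) := (polar_lipschitz ha hlow).continuous

lemma polar_pos (ha : 0 < a) (hlow : ∀ ξ, a * ‖ξ‖ ≤ F ξ) {x : E} (hx : x ≠ 0) :
    0 < polar F x := by
  have h1 : (inner ℝ x x : ℝ) / F x ≤ polar F x := le_polar ha hlow hx x
  have h2 : (inner ℝ x x : ℝ) = ‖x‖ * ‖x‖ := real_inner_self_eq_norm_mul_norm x
  have hFx : 0 < F x := Fpos ha hlow hx
  have hxn : 0 < ‖x‖ := norm_pos_iff.2 hx
  calc (0:ℝ) < (‖x‖ * ‖x‖) / F x := by positivity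
    _ ≤ polar F x := by rw [← h2]; exact h1

end PolarLemmas

lemma hm_ball_pos (m : ℕ) (hm : 0 < m) {r : ℝ} (hr : 0 < r) :
    0 < μH[(m:ℝ)] (Metric.closedBall (0 : EuclideanSpace ℝ (Fin m)) r) := by
  have hpi : (μH[(m:ℝ)] : Measure (Fin m → ℝ)) = volume := by
    simpa using (hausdorffMeasure_pi_real (ι := Fin m))
  have hK := PiLp.antilipschitzWith_ofLp 2 (fun _ : Fin m => ℝ)
  set K : NNReal := (Fintype.card (Fin m) : NNReal) ^ ((1:ℝ≥0∞)/2).toReal with hKdef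
  have hKpos : 0 < K := by
    rw [hKdef]
    apply NNReal.rpow_pos
    simpa using hm
  have hsub : Metric.closedBall (0 : Fin m → ℝ) (r / K) ⊆
      (⇑(WithLp.equiv 2 (Fin m → ℝ))) '' (Metric.closedBall (0 : EuclideanSpace ℝ (Fin m)) r) := by
    intro y hy
    refine ⟨(WithLp.equiv 2 (Fin m → ℝ)).symm y, ?_, by simp⟩
    have h1 : dist ((WithLp.equiv 2 (Fin m → ℝ)).symm y) 0 ≤ K * dist y 0 := by
      simpa using hK.le_mul_dist ((WithLp.equiv 2 (Fin m → ℝ)).symm y) 0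
    have hy' : dist y 0 ≤ r / K := by simpa [Metric.mem_closedBall] using hy
    have : (K:ℝ) * dist y 0 ≤ K * (r / K) := by
      exact mul_le_mul_of_nonneg_left hy' (by positivity)
    simp only [Metric.mem_closedBall]
    calc dist ((WithLp.equiv 2 (Fin m → ℝ)).symm y) 0 ≤ K * dist y 0 := h1
      _ ≤ K * (r / K) := this
      _ = r := by field_simp
  have h2 : μH[(m:ℝ)] ((⇑(WithLp.equiv 2 (Fin m → ℝ))) '' (Metric.closedBall (0 : EuclideanSpace ℝ (Fin m)) r))
      ≤ μH[(m:ℝ)] (Metric.closedBall (0 : EuclideanSpace ℝ (Fin m)) r) := by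
    simpa using (PiLp.lipschitzWith_ofLp 2 (fun _ : Fin m => ℝ)).hausdorffMeasure_image_le
      (by positivity : (0:ℝ) ≤ (m:ℝ)) (Metric.closedBall (0 : EuclideanSpace ℝ (Fin m)) r)
  have h0 : 0 < μH[(m:ℝ)] (Metric.closedBall (0 : Fin m → ℝ) (r / K)) := by
    rw [hpi]
    apply measure_closedBall_pos
    positivity
  exact lt_of_lt_of_le h0 (le_trans (measure_mono hsub) h2)

lemma hm_ball_fin (m : ℕ) {r : ℝ} :
    μH[(m:ℝ)] (Metric.closedBall (0 : EuclideanSpace ℝ (Fin m)) r) < ⊤ := by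
  have hpi : (μH[(m:ℝ)] : Measure (Fin m → ℝ)) = volume := by
    simpa using (hausdorffMeasure_pi_real (ι := Fin m))
  have hK := PiLp.antilipschitzWith_ofLp 2 (fun _ : Fin m => ℝ)
  have hpre : Metric.closedBall (0 : EuclideanSpace ℝ (Fin m)) r ⊆
      (⇑(WithLp.equiv 2 (Fin m → ℝ))) ⁻¹' (Metric.closedBall (0 : Fin m → ℝ) r) := by
    intro x hx
    have := (PiLp.lipschitzWith_ofLp 2 (fun _ : Fin m => ℝ)).dist_le_mul x 0
    simp only [Set.mem_preimage, Metric.mem_closedBall] at *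
    simpa using le_trans (by simpa using this) hx
  calc μH[(m:ℝ)] (Metric.closedBall (0 : EuclideanSpace ℝ (Fin m)) r)
      ≤ μH[(m:ℝ)] ((⇑(WithLp.equiv 2 (Fin m → ℝ))) ⁻¹' (Metric.closedBall (0 : Fin m → ℝ) r)) :=
        measure_mono hpre
    _ ≤ (((Fintype.card (Fin m) : NNReal) ^ ((1:ℝ≥0∞)/2).toReal : NNReal) : ℝ≥0∞) ^ (m:ℝ) *
        μH[(m:ℝ)] (Metric.closedBall (0 : Fin m → ℝ) r) :=
        hK.hausdorffMeasure_preimage_le (by positivity) _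
    _ < ⊤ := by
        rw [hpi]
        apply ENNReal.mul_lt_top
        · exact ENNReal.rpow_lt_top_of_nonneg (by positivity) ENNReal.coe_ne_top
        · exact measure_closedBall_lt_top

lemma hm_subspace_ball (n : ℕ) (H : Submodule ℝ (EuclideanSpace ℝ (Fin n))) {r : ℝ} :
    μH[((finrank ℝ H : ℕ):ℝ)] {w : EuclideanSpace ℝ (Fin n) | w ∈ H ∧ ‖w‖ ≤ r}
      = μH[((finrank ℝ H : ℕ):ℝ)]
          (Metric.closedBall (0 : EuclideanSpace ℝ (Fin (finrank ℝ H))) r) := by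
  set m := finrank ℝ H with hm
  let b := stdOrthonormalBasis ℝ H
  let f : EuclideanSpace ℝ (Fin m) → EuclideanSpace ℝ (Fin n) :=
    fun y => ((b.repr.symm y : H) : EuclideanSpace ℝ (Fin n))
  have hiso : Isometry f := by
    have : f = (H.subtypeₗᵢ.comp b.repr.symm.toLinearIsometry) := rfl
    rw [this]
    exact (H.subtypeₗᵢ.comp b.repr.symm.toLinearIsometry).isometry
  have himg : f '' (Metric.closedBall 0 r) = {w : EuclideanSpace ℝ (Fin n) | w ∈ H ∧ ‖w‖ ≤ r} := by
    ext w
    constructor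
    · rintro ⟨y, hy, rfl⟩
      refine ⟨(b.repr.symm y : H).2, ?_⟩
      have : ‖f y‖ = ‖y‖ := by
        have h := hiso.dist_eq y 0
        have hf0 : f 0 = 0 := by simp [f]
        rw [hf0, dist_zero_right, dist_zero_right] at h
        exact h
      rw [this]
      simpa [Metric.mem_closedBall, dist_zero_right] using hy
    · rintro ⟨hwH, hwr⟩
      refine ⟨b.repr ⟨w, hwH⟩, ?_, by simp [f]⟩
      simp only [Metric.mem_closedBall, dist_zero_right]
      rw [b.repr.norm_map]
      simpa using hwr
  rw [← himg, hiso.hausdorffMeasure_image (Or.inl (by positivity))]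

section GaugeFacts
variable {n : ℕ} {Ω : Set (EuclideanSpace ℝ (Fin n))}

lemma gauge_lb (hbd : Bornology.IsBounded Ω) (hop : IsOpen Ω) (h0 : (0:EuclideanSpace ℝ (Fin n)) ∈ Ω) :
    ∃ R' : ℝ, 0 < R' ∧ Ω ⊆ ball 0 R' ∧ ∀ x, ‖x‖ / R' ≤ gauge Ω x := by
  obtain ⟨R₀, hR₀⟩ := hbd.subset_ball 0
  refine ⟨max R₀ 1, by positivity, ?_, ?_⟩
  · exact hR₀.trans (Metric.ball_subset_ball (le_max_left _ _))
  · intro x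
    have habs : Absorbent ℝ Ω := absorbent_nhds_zero (hop.mem_nhds h0)
    have := gauge_mono habs (hR₀.trans (Metric.ball_subset_ball (le_max_left R₀ 1))) x
    rwa [gauge_ball (by positivity)] at this

lemma gauge_ub {ε : ℝ} (hε : 0 < ε) (hball : ball (0:EuclideanSpace ℝ (Fin n)) ε ⊆ Ω) (x) :
    gauge Ω x ≤ ‖x‖ / ε := by
  have := gauge_mono (absorbent_ball_zero hε) hball x
  rwa [gauge_ball hε.le] at this

lemma gauge_pos' (hbd : Bornology.IsBounded Ω) (hop : IsOpen Ω)
    (h0 : (0:EuclideanSpace ℝ (Fin n)) ∈ Ω) {x : EuclideanSpace ℝ (Fin n)} (hx : x ≠ 0) :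
    0 < gauge Ω x := by
  obtain ⟨R', hR', _, hlb⟩ := gauge_lb hbd hop h0
  exact lt_of_lt_of_le (div_pos (norm_pos_iff.2 hx) hR') (hlb x)

end GaugeFacts

lemma frontier_local_pos (n : ℕ) (hn : 2 ≤ n)
    (Ω : Set (EuclideanSpace ℝ (Fin n)))
    (hbd : Bornology.IsBounded Ω) (hop : IsOpen Ω) (hconvΩ : Convex ℝ Ω)
    (h0 : (0 : EuclideanSpace ℝ (Fin n)) ∈ Ω)
    {V : Set (EuclideanSpace ℝ (Fin n))} (hV : IsOpen V)
    {z : EuclideanSpace ℝ (Fin n)} (hz : z ∈ frontier Ω) (hzV : z ∈ V) :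
    0 < μH[(n:ℝ)-1] (frontier Ω ∩ V) := by
  let E := EuclideanSpace ℝ (Fin n)
  have hnhds : Ω ∈ nhds (0:E) := hop.mem_nhds h0
  obtain ⟨ε, hε, hball⟩ := Metric.mem_nhds_iff.1 hnhds
  set g : E → ℝ := gauge Ω with hgdef
  have gcont : Continuous g := continuous_gauge hconvΩ hnhds
  have gpos : ∀ {x : E}, x ≠ 0 → 0 < g x := fun hx => gauge_pos' hbd hop h0 hx
  have hz0 : z ≠ 0 := by
    rintro rfl
    have h1 : g 0 = 1 := (gauge_eq_one_iff_mem_frontier hconvΩ hnhds).2 hz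
    rw [hgdef, gauge_zero] at h1
    norm_num at h1
  have hgz : g z = 1 := (gauge_eq_one_iff_mem_frontier hconvΩ hnhds).2 hz
  set φ : E → E := fun x => (g x)⁻¹ • x with hφdef
  have hφfr : ∀ {x : E}, x ≠ 0 → φ x ∈ frontier Ω := by
    intro x hx
    have : g (φ x) = 1 := by
      rw [hφdef]
      simp only
      rw [hgdef] at *
      rw [gauge_smul_of_nonneg (inv_nonneg.2 (gpos hx).le), smul_eq_mul]
      exact inv_mul_cancel₀ (ne_of_gt (gpos hx))
    exact (gauge_eq_one_iff_mem_frontier hconvΩ hnhds).1 this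
  -- open set W
  set U₀ : Set E := {x | x ≠ 0} with hU₀def
  have hU₀ : IsOpen U₀ := isOpen_compl_singleton
  have hφcont : ContinuousOn φ U₀ := by
    refine ContinuousOn.smul (f := fun x => (g x)⁻¹) (g := id) ?_ ?_
    · exact (gcont.continuousOn.inv₀ fun x hx => ne_of_gt (gpos hx))
    · exact continuousOn_id
  have hWopen : IsOpen (U₀ ∩ φ ⁻¹' V) := hφcont.isOpen_inter_preimage hU₀ hV
  have hzW : z ∈ U₀ ∩ φ ⁻¹' V := by
    constructor
    · exact hz0
    · show φ z ∈ V
      rw [hφdef]; simp only [hgz]; simpa using hzV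
  obtain ⟨δ, hδ, hδsub⟩ := Metric.isOpen_iff.1 hWopen z hzW
  set τ := δ/2 with hτdef
  have hτ : 0 < τ := by positivity
  -- hyperplane
  set H : Submodule ℝ E := (ℝ ∙ z)ᗮ with hHdef
  set zh : E := ‖z‖⁻¹ • z with hzhdef
  have hzh1 : ‖zh‖ = 1 := by
    rw [hzhdef, norm_smul, norm_inv, norm_norm]
    exact inv_mul_cancel₀ (norm_ne_zero_iff.2 hz0)
  set π : E → E := fun w => w - ⟪zh, w⟫ • zh with hπdef
  have hπnorm : ∀ w, ‖π w‖ ≤ ‖w‖ := by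
    intro w
    have hsq : ‖π w‖^2 = ‖w‖^2 - ⟪zh, w⟫^2 := by
      rw [hπdef]
      simp only
      rw [norm_sub_sq_real, real_inner_smul_right, norm_smul]
      rw [real_inner_comm w zh]
      rw [hzh1]
      ring_nf
      rw [Real.norm_eq_abs, sq_abs]
      ring
    have h1 : ‖π w‖^2 ≤ ‖w‖^2 := by rw [hsq]; nlinarith [sq_nonneg (⟪zh, w⟫)]
    calc ‖π w‖ = Real.sqrt (‖π w‖^2) := (Real.sqrt_sq (norm_nonneg _)).symm
      _ ≤ Real.sqrt (‖w‖^2) := Real.sqrt_le_sqrt h1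
      _ = ‖w‖ := Real.sqrt_sq (norm_nonneg _)
  have hπsub : ∀ w w', π w - π w' = π (w - w') := by
    intro w w'
    rw [hπdef]; simp only [inner_sub_right, sub_smul]
    abel
  have hπlip : LipschitzWith 1 π := by
    apply LipschitzWith.of_dist_le_mul
    intro w w'
    rw [dist_eq_norm, dist_eq_norm]
    calc ‖π w - π w'‖ = ‖π (w - w')‖ := by rw [hπsub]
      _ ≤ ‖w - w'‖ := hπnorm _
      _ = 1 * ‖w - w'‖ := (one_mul _).symm
  have hπcomb : ∀ (α β : ℝ) (u : E), u ∈ H → π (α • z + β • u) = β • u := by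
    intro α β u huH
    have hzu : ⟪z, u⟫ = 0 := Submodule.mem_orthogonal_singleton_iff_inner_right.1 huH
    have h1 : ⟪zh, α • z + β • u⟫ = α * ‖z‖ := by
      rw [hzhdef, inner_add_right, real_inner_smul_right, real_inner_smul_right,
        real_inner_smul_left, real_inner_smul_left, hzu, real_inner_self_eq_norm_mul_norm]
      have : ‖z‖ ≠ 0 := norm_ne_zero_iff.2 hz0
      field_simp
      ring
    rw [hπdef]
    simp only [h1]
    rw [hzhdef, smul_smul]
    have : α * ‖z‖ * ‖z‖⁻¹ = α := by
      have : ‖z‖ ≠ 0 := norm_ne_zero_iff.2 hz0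
      field_simp
    rw [this]
    abel
  -- the key surjectivity onto a small disc
  set ρ := τ * ε / (‖z‖ + τ) with hρdef
  have hρ : 0 < ρ := by
    have : 0 < ‖z‖ := norm_pos_iff.2 hz0
    positivity
  have hκ : ∀ u : E, u ∈ H → ‖u‖ = 1 → ∀ s ∈ Icc (0:ℝ) ρ,
      ∃ x ∈ frontier Ω ∩ V, π x = s • u := by
    intro u huH hu1 s hs
    have hmemW : ∀ t ∈ Icc (0:ℝ) τ, z + t • u ∈ U₀ ∩ φ ⁻¹' V := by
      intro t ht
      apply hδsub
      rw [Metric.mem_ball, dist_eq_norm]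
      have : z + t • u - z = t • u := by abel
      rw [this, norm_smul, hu1, mul_one, Real.norm_eq_abs, abs_of_nonneg ht.1]
      calc t ≤ τ := ht.2
        _ < δ := by rw [hτdef]; linarith
    set ψ : ℝ → ℝ := fun t => t * (g (z + t • u))⁻¹ with hψdef
    have hcont : ContinuousOn ψ (Icc 0 τ) := by
      apply ContinuousOn.mul continuousOn_id
      apply ContinuousOn.inv₀
      · exact (gcont.comp (continuous_const.add (continuous_id.smul continuous_const))).continuousOn
      · intro t ht
        exact ne_of_gt (gpos (hmemW t ht).1)
    have hψ0 : ψ 0 = 0 := by simp [hψdef]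
    have hψτ : ρ ≤ ψ τ := by
      have hxne : z + τ • u ≠ 0 := (hmemW τ ⟨hτ.le, le_refl _⟩).1
      have hgub : g (z + τ • u) ≤ (‖z‖ + τ) / ε := by
        have h1 := gauge_ub hε hball (z + τ • u)
        have h2 : ‖z + τ • u‖ ≤ ‖z‖ + τ := by
          calc ‖z + τ • u‖ ≤ ‖z‖ + ‖τ • u‖ := norm_add_le _ _
            _ = ‖z‖ + τ := by rw [norm_smul, hu1, mul_one, Real.norm_eq_abs, abs_of_pos hτ]
        apply h1.trans
        gcongr
      have hinv : ((‖z‖ + τ) / ε)⁻¹ ≤ (g (z + τ • u))⁻¹ := by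
        apply inv_anti₀ (gpos hxne) hgub
      calc ρ = τ * ((‖z‖ + τ) / ε)⁻¹ := by
              rw [inv_div, hρdef]; ring
        _ ≤ τ * (g (z + τ • u))⁻¹ := by
              apply mul_le_mul_of_nonneg_left hinv hτ.le
        _ = ψ τ := rfl
    have hIcc : s ∈ Icc (ψ 0) (ψ τ) := by rw [hψ0]; exact ⟨hs.1, hs.2.trans hψτ⟩
    obtain ⟨t, htI, hts⟩ := intermediate_value_Icc hτ.le hcont hIcc
    have hxW := hmemW t htI
    refine ⟨φ (z + t • u), ⟨hφfr hxW.1, hxW.2⟩, ?_⟩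
    have hexp : φ (z + t • u) = (g (z + t • u))⁻¹ • z + ((g (z + t • u))⁻¹ * t) • u := by
      rw [hφdef]
      simp only [smul_add, smul_smul]
    rw [hexp, hπcomb _ _ u huH, ← hts]
    rw [hψdef]
    simp only [mul_comm]
  -- surjectivity onto a small subspace-ball
  have hsubset : {w : E | w ∈ H ∧ ‖w‖ ≤ ρ} ⊆ π '' (frontier Ω ∩ V) := by
    rintro w ⟨hwH, hwρ⟩
    by_cases hw0 : w = 0
    · refine ⟨z, ⟨hz, hzV⟩, ?_⟩
      have h := hπcomb 1 0 0 (Submodule.zero_mem H)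
      simpa [hw0] using h
    · set u := ‖w‖⁻¹ • w with hudef
      have huH : u ∈ H := H.smul_mem _ hwH
      have hu1 : ‖u‖ = 1 := by
        rw [hudef, norm_smul, norm_inv, norm_norm]
        exact inv_mul_cancel₀ (norm_ne_zero_iff.2 hw0)
      obtain ⟨x, hx, hπx⟩ := hκ u huH hu1 ‖w‖ ⟨norm_nonneg w, hwρ⟩
      refine ⟨x, hx, ?_⟩
      rw [hπx, hudef, smul_smul, mul_inv_cancel₀ (norm_ne_zero_iff.2 hw0), one_smul]
  have hd : (0:ℝ) ≤ (n:ℝ) - 1 := by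
    have h2 : (2:ℝ) ≤ (n:ℝ) := by exact_mod_cast hn
    linarith
  haveI : Fact (finrank ℝ (EuclideanSpace ℝ (Fin n)) = (n-1)+1) := ⟨by
    rw [finrank_euclideanSpace_fin]; omega⟩
  have hfr : finrank ℝ H = n - 1 := Submodule.finrank_orthogonal_span_singleton hz0
  have h1n : (1:ℕ) ≤ n := by omega
  have hcast : ((finrank ℝ H : ℕ) : ℝ) = (n:ℝ) - 1 := by
    rw [hfr, Nat.cast_sub h1n, Nat.cast_one]
  have hpos0 : 0 < μH[(n:ℝ)-1] {w : E | w ∈ H ∧ ‖w‖ ≤ ρ} := by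
    have hb1 := hm_subspace_ball n H (r := ρ)
    have hb2 := hm_ball_pos (finrank ℝ H) (by omega) hρ
    rw [hcast] at hb1 hb2
    rw [hb1]
    exact hb2
  calc (0:ℝ≥0∞) < μH[(n:ℝ)-1] {w : E | w ∈ H ∧ ‖w‖ ≤ ρ} := hpos0
    _ ≤ μH[(n:ℝ)-1] (π '' (frontier Ω ∩ V)) := measure_mono hsubset
    _ ≤ ((1:NNReal):ℝ≥0∞) ^ ((n:ℝ)-1) * μH[(n:ℝ)-1] (frontier Ω ∩ V) :=
        hπlip.hausdorffMeasure_image_le hd (frontier Ω ∩ V)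
    _ = μH[(n:ℝ)-1] (frontier Ω ∩ V) := by
        rw [ENNReal.coe_one, ENNReal.one_rpow, one_mul]

lemma abs_coord_le_norm {n : ℕ} (x : EuclideanSpace ℝ (Fin n)) (i : Fin n) : |x i| ≤ ‖x‖ := by
  rw [EuclideanSpace.norm_eq]
  calc |x i| = Real.sqrt (‖x i‖^2) := by
        rw [Real.norm_eq_abs, Real.sqrt_sq_eq_abs, abs_abs]
    _ ≤ Real.sqrt (∑ j, ‖x j‖^2) := Real.sqrt_le_sqrt
        (Finset.single_le_sum (f := fun j => ‖x j‖^2) (fun j _ => sq_nonneg _)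
          (Finset.mem_univ i))


lemma frontier_fin_measure (n : ℕ) (hn : 2 ≤ n)
    (Ω : Set (EuclideanSpace ℝ (Fin n)))
    (hbd : Bornology.IsBounded Ω) (hop : IsOpen Ω) (hconvΩ : Convex ℝ Ω)
    (h0 : (0 : EuclideanSpace ℝ (Fin n)) ∈ Ω) :
    μH[(n:ℝ)-1] (frontier Ω) < ⊤ := by
  have hd : (0:ℝ) ≤ (n:ℝ) - 1 := by
    have h2 : (2:ℝ) ≤ (n:ℝ) := by exact_mod_cast hn
    linarith
  have hnhds : Ω ∈ nhds (0:EuclideanSpace ℝ (Fin n)) := hop.mem_nhds h0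
  obtain ⟨ε, hε, hball⟩ := Metric.mem_nhds_iff.1 hnhds
  obtain ⟨R', hR', hΩR, hglb⟩ := gauge_lb hbd hop h0
  set g : EuclideanSpace ℝ (Fin n) → ℝ := gauge Ω with hgdef
  have gpos : ∀ {x : EuclideanSpace ℝ (Fin n)}, x ≠ 0 → 0 < g x := by
    intro x hx
    exact lt_of_lt_of_le (div_pos (norm_pos_iff.2 hx) hR') (hglb x)
  have hglip : ∀ x y, |g x - g y| ≤ ε⁻¹ * ‖x - y‖ := by
    have h := hconvΩ.lipschitzWith_gauge (r := ⟨ε, hε.le⟩) (by exact_mod_cast hε) hball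
    intro x y
    have h2 := h.dist_le_mul x y
    rw [Real.dist_eq, dist_eq_norm] at h2
    calc |g x - g y| ≤ ((⟨ε, hε.le⟩ : NNReal)⁻¹ : NNReal) * ‖x - y‖ := h2
      _ = ε⁻¹ * ‖x - y‖ := by
          have hc : (((⟨ε, hε.le⟩ : NNReal)⁻¹ : NNReal) : ℝ) = ε⁻¹ := by
            exact NNReal.coe_inv ⟨ε, hε.le⟩
          rw [hc]
  set φ : EuclideanSpace ℝ (Fin n) → EuclideanSpace ℝ (Fin n) := fun x => (g x)⁻¹ • x with hφdef
  set Q : Set (EuclideanSpace ℝ (Fin n)) :=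
    {x | (∀ i, |x i| ≤ 1) ∧ ∃ k, |x k| = 1} with hQdef
  have hq1 : ∀ x ∈ Q, 1 ≤ ‖x‖ := by
    rintro x ⟨hx1, k, hk⟩
    calc (1:ℝ) = |x k| := hk.symm
      _ ≤ ‖x‖ := abs_coord_le_norm x k
  have hq2 : ∀ x ∈ Q, ‖x‖ ≤ Real.sqrt n := by
    rintro x ⟨hx1, -⟩
    rw [EuclideanSpace.norm_eq]
    apply Real.sqrt_le_sqrt
    calc ∑ j, ‖x j‖^2 ≤ ∑ _j : Fin n, (1:ℝ) := by
          apply Finset.sum_le_sum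
          intro j _
          rw [Real.norm_eq_abs]
          nlinarith [hx1 j, abs_nonneg (x j)]
      _ = n := by simp
  have hgalow : ∀ x ∈ Q, 1/R' ≤ g x := by
    intro x hx
    calc 1/R' ≤ ‖x‖/R' := by gcongr; exact hq1 x hx
      _ ≤ g x := hglb x
  have hQ0 : ∀ x ∈ Q, x ≠ 0 := by
    intro x hx h0x
    have := hq1 x hx
    rw [h0x] at this
    simp at this
    linarith
  -- Lipschitz on Q
  set K : ℝ := Real.sqrt n * (R' * R') * ε⁻¹ + R' with hKdef
  have hK0 : 0 ≤ K := by positivity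
  have hφlip : LipschitzOnWith K.toNNReal φ Q := by
    rw [lipschitzOnWith_iff_dist_le_mul]
    intro x hx y hy
    have hgx := gpos (hQ0 x hx)
    have hgy := gpos (hQ0 y hy)
    have hgxl := hgalow x hx
    have hgyl := hgalow y hy
    have hgxinv : (g x)⁻¹ ≤ R' := by
      rw [inv_le_comm₀ hgx hR']
      calc R'⁻¹ = 1/R' := (one_div R').symm
        _ ≤ g x := hgxl
    have hgyinv : (g y)⁻¹ ≤ R' := by
      rw [inv_le_comm₀ hgy hR']
      calc R'⁻¹ = 1/R' := (one_div R').symm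
        _ ≤ g y := hgyl
    have hsplit : φ x - φ y = ((g x)⁻¹ - (g y)⁻¹) • x + (g y)⁻¹ • (x - y) := by
      rw [hφdef]
      simp only [sub_smul, smul_sub]
      abel
    have hinvdiff : |(g x)⁻¹ - (g y)⁻¹| ≤ R' * R' * (ε⁻¹ * ‖x - y‖) := by
      have heq : (g x)⁻¹ - (g y)⁻¹ = (g y - g x) * ((g x)⁻¹ * (g y)⁻¹) := by
        field_simp
      rw [heq, abs_mul]
      have h1 : |g y - g x| ≤ ε⁻¹ * ‖x - y‖ := by
        have := hglip y x
        rwa [norm_sub_rev] at this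
      have h2 : |(g x)⁻¹ * (g y)⁻¹| ≤ R' * R' := by
        rw [abs_mul, abs_of_pos (inv_pos.2 hgx), abs_of_pos (inv_pos.2 hgy)]
        exact mul_le_mul hgxinv hgyinv (inv_pos.2 hgy).le (by positivity)
      calc |g y - g x| * |(g x)⁻¹ * (g y)⁻¹| ≤ (ε⁻¹ * ‖x - y‖) * (R' * R') := by
            apply mul_le_mul h1 h2 (abs_nonneg _) (by positivity)
        _ = R' * R' * (ε⁻¹ * ‖x - y‖) := by ring
    rw [dist_eq_norm, dist_eq_norm]
    calc ‖φ x - φ y‖ = ‖((g x)⁻¹ - (g y)⁻¹) • x + (g y)⁻¹ • (x - y)‖ := by rw [hsplit]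
      _ ≤ ‖((g x)⁻¹ - (g y)⁻¹) • x‖ + ‖(g y)⁻¹ • (x - y)‖ := norm_add_le _ _
      _ = |(g x)⁻¹ - (g y)⁻¹| * ‖x‖ + |(g y)⁻¹| * ‖x - y‖ := by
          rw [norm_smul, norm_smul, Real.norm_eq_abs, Real.norm_eq_abs]
      _ ≤ (R' * R' * (ε⁻¹ * ‖x - y‖)) * Real.sqrt n + R' * ‖x - y‖ := by
          apply add_le_add
          · apply mul_le_mul hinvdiff (hq2 x hx) (norm_nonneg _) (by positivity)
          · apply mul_le_mul_of_nonneg_right _ (norm_nonneg _)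
            rw [abs_of_pos (inv_pos.2 hgy)]
            exact hgyinv
      _ = K * ‖x - y‖ := by rw [hKdef]; ring
      _ = (K.toNNReal : ℝ) * ‖x - y‖ := by rw [Real.coe_toNNReal _ hK0]
  -- frontier is radial image of Q
  have hfrsub : frontier Ω ⊆ φ '' Q := by
    intro y hy
    have hy0 : y ≠ 0 := by
      rintro rfl
      have h1 : g 0 = 1 := (gauge_eq_one_iff_mem_frontier hconvΩ hnhds).2 hy
      rw [hgdef, gauge_zero] at h1
      norm_num at h1
    have hgy : g y = 1 := (gauge_eq_one_iff_mem_frontier hconvΩ hnhds).2 hy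
    haveI : Nonempty (Fin n) := ⟨⟨0, by omega⟩⟩
    have hne : (Finset.univ : Finset (Fin n)).Nonempty := Finset.univ_nonempty
    set M : ℝ := Finset.univ.sup' hne (fun i => |y i|) with hMdef
    obtain ⟨k, -, hkM⟩ := Finset.exists_mem_eq_sup' hne (fun i => |y i|)
    have hMub : ∀ i, |y i| ≤ M := fun i => Finset.le_sup' (fun i => |y i|) (Finset.mem_univ i)
    have hM0 : 0 < M := by
      rcases lt_or_ge 0 M with h | h
      · exact h
      · exfalso
        apply hy0
        ext i
        have h1 := hMub i
        have h2 := abs_nonneg (y i)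
        have : |y i| = 0 := le_antisymm (h1.trans h) h2
        simpa using this
    refine ⟨M⁻¹ • y, ⟨?_, ⟨k, ?_⟩⟩, ?_⟩
    · intro i
      have : (M⁻¹ • y) i = M⁻¹ * y i := rfl
      rw [this, abs_mul, abs_of_pos (inv_pos.2 hM0)]
      rw [inv_mul_le_iff₀ hM0, mul_one]
      exact hMub i
    · have : (M⁻¹ • y) k = M⁻¹ * y k := rfl
      rw [this, abs_mul, abs_of_pos (inv_pos.2 hM0), ← hkM, hMdef]
      simp only
      rw [← hMdef, inv_mul_cancel₀ (ne_of_gt hM0)]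
    · have hgM : g (M⁻¹ • y) = M⁻¹ := by
        rw [hgdef, gauge_smul_of_nonneg (inv_pos.2 hM0).le, smul_eq_mul, ← hgdef, hgy, mul_one]
      rw [hφdef]
      simp only [hgM, inv_inv, smul_smul]
      rw [mul_inv_cancel₀ (ne_of_gt hM0), one_smul]
  -- Q has finite measure
  haveI : Fact (finrank ℝ (EuclideanSpace ℝ (Fin n)) = (n-1)+1) := ⟨by
    rw [finrank_euclideanSpace_fin]; omega⟩
  have h1n : (1:ℕ) ≤ n := by omega
  have hQfin : μH[(n:ℝ)-1] Q < ⊤ := by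
    set T : Fin n × Bool → Set (EuclideanSpace ℝ (Fin n)) := fun kσ =>
      (fun w => (if kσ.2 then (1:ℝ) else -1) • EuclideanSpace.single kσ.1 (1:ℝ) + w) ''
        {w | w ∈ (ℝ ∙ (EuclideanSpace.single kσ.1 (1:ℝ)))ᗮ ∧ ‖w‖ ≤ Real.sqrt n + 1} with hTdef
    have hQT : Q ⊆ ⋃ kσ : Fin n × Bool, T kσ := by
      rintro x ⟨hx1, k, hk⟩
      rcases (abs_eq (by norm_num : (0:ℝ) ≤ 1)).1 hk with hk1 | hk1
      · refine Set.mem_iUnion.2 ⟨⟨k, true⟩, ?_⟩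
        rw [hTdef]
        refine ⟨x - (1:ℝ) • EuclideanSpace.single k (1:ℝ), ⟨?_, ?_⟩, by
          rw [if_pos rfl]; module⟩
        · rw [Submodule.mem_orthogonal_singleton_iff_inner_right]
          rw [inner_sub_right, EuclideanSpace.inner_single_left, EuclideanSpace.inner_single_left]
          simp [hk1]
        · calc ‖x - (1:ℝ) • EuclideanSpace.single k (1:ℝ)‖
              ≤ ‖x‖ + ‖(1:ℝ) • EuclideanSpace.single k (1:ℝ)‖ := norm_sub_le _ _
            _ ≤ Real.sqrt n + 1 := by
                apply add_le_add (hq2 x ⟨hx1, k, hk⟩)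
                rw [norm_smul, EuclideanSpace.norm_single]
                norm_num
      · refine Set.mem_iUnion.2 ⟨⟨k, false⟩, ?_⟩
        rw [hTdef]
        refine ⟨x - (-1:ℝ) • EuclideanSpace.single k (1:ℝ), ⟨?_, ?_⟩, by
          rw [if_neg (by simp)]; module⟩
        · rw [Submodule.mem_orthogonal_singleton_iff_inner_right]
          rw [inner_sub_right, EuclideanSpace.inner_single_left, EuclideanSpace.inner_single_left]
          simp [hk1]
        · calc ‖x - (-1:ℝ) • EuclideanSpace.single k (1:ℝ)‖
              ≤ ‖x‖ + ‖(-1:ℝ) • EuclideanSpace.single k (1:ℝ)‖ := norm_sub_le _ _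
            _ ≤ Real.sqrt n + 1 := by
                apply add_le_add (hq2 x ⟨hx1, k, hk⟩)
                rw [norm_smul, EuclideanSpace.norm_single]
                norm_num
    have hTfin : ∀ kσ : Fin n × Bool, μH[(n:ℝ)-1] (T kσ) < ⊤ := by
      intro kσ
      have hiso : Isometry (fun w : EuclideanSpace ℝ (Fin n) =>
          (if kσ.2 then (1:ℝ) else -1) • EuclideanSpace.single kσ.1 (1:ℝ) + w) :=
        Isometry.of_dist_eq (fun w w' => dist_add_left _ _ _)
      rw [hTdef]
      simp only
      rw [hiso.hausdorffMeasure_image (Or.inl hd)]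
      have hsne : EuclideanSpace.single kσ.1 (1:ℝ) ≠ 0 := by
        intro h
        have := congrArg norm h
        rw [EuclideanSpace.norm_single] at this
        norm_num at this
      have hfr : finrank ℝ ((ℝ ∙ (EuclideanSpace.single kσ.1 (1:ℝ)))ᗮ : Submodule ℝ (EuclideanSpace ℝ (Fin n))) = n - 1 :=
        Submodule.finrank_orthogonal_span_singleton hsne
      have hcast : ((finrank ℝ ((ℝ ∙ (EuclideanSpace.single kσ.1 (1:ℝ)))ᗮ : Submodule ℝ (EuclideanSpace ℝ (Fin n))) : ℕ) : ℝ) = (n:ℝ) - 1 := by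
        rw [hfr, Nat.cast_sub h1n, Nat.cast_one]
      have hb1 := hm_subspace_ball n ((ℝ ∙ (EuclideanSpace.single kσ.1 (1:ℝ)))ᗮ) (r := Real.sqrt n + 1)
      have hb2 := hm_ball_fin (finrank ℝ ((ℝ ∙ (EuclideanSpace.single kσ.1 (1:ℝ)))ᗮ : Submodule ℝ (EuclideanSpace ℝ (Fin n)))) (r := Real.sqrt n + 1)
      rw [hcast] at hb1 hb2
      rw [hb1]
      exact hb2
    calc μH[(n:ℝ)-1] Q ≤ μH[(n:ℝ)-1] (⋃ kσ : Fin n × Bool, T kσ) := measure_mono hQT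
      _ ≤ ∑' kσ : Fin n × Bool, μH[(n:ℝ)-1] (T kσ) := measure_iUnion_le T
      _ < ⊤ := by
          rw [tsum_fintype]
          apply ENNReal.sum_lt_top.2
          intro kσ _
          exact hTfin kσ
  -- conclude
  calc μH[(n:ℝ)-1] (frontier Ω) ≤ μH[(n:ℝ)-1] (φ '' Q) := measure_mono hfrsub
    _ ≤ (K.toNNReal : ℝ≥0∞) ^ ((n:ℝ)-1) * μH[(n:ℝ)-1] Q := hφlip.hausdorffMeasure_image_le hd
    _ < ⊤ := by
        apply ENNReal.mul_lt_top
        · exact ENNReal.rpow_lt_top_of_nonneg hd ENNReal.coe_ne_top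
        · exact hQfin

-- auxiliary: F is dominated by the norm, and continuous
lemma F_norm_bound {n : ℕ} (hn : 1 ≤ n) {F : EuclideanSpace ℝ (Fin n) → ℝ}
    (hF0 : ∀ ξ, 0 ≤ F ξ)
    (hconv : ConvexOn ℝ Set.univ F)
    (hhom : ∀ (t : ℝ) (ξ : EuclideanSpace ℝ (Fin n)), F (t • ξ) = |t| * F ξ) :
    ∃ C : ℝ, 0 < C ∧ (∀ x, F x ≤ C * ‖x‖) ∧ Continuous F := by
  set C₀ : ℝ := ∑ i : Fin n, F (EuclideanSpace.single i (1:ℝ)) with hC₀def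
  have hC₀ : 0 ≤ C₀ := Finset.sum_nonneg fun i _ => hF0 _
  have hFsum : ∀ (s : Finset (Fin n)) (f : Fin n → EuclideanSpace ℝ (Fin n)),
      F (∑ i ∈ s, f i) ≤ ∑ i ∈ s, F (f i) := by
    intro s
    induction s using Finset.cons_induction with
    | empty => intro f; simp [Fzero hhom]
    | cons i s his ih =>
        intro f
        rw [Finset.sum_cons, Finset.sum_cons]
        exact (Fsub hconv hhom _ _).trans (add_le_add_right (ih f) _)
  have hbound : ∀ x, F x ≤ (C₀ + 1) * ‖x‖ := by
    intro x
    have hdecomp : ∑ i, (x i) • EuclideanSpace.single i (1:ℝ) = x := by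
      have h := (EuclideanSpace.basisFun (Fin n) ℝ).sum_repr x
      simpa [EuclideanSpace.basisFun_apply, EuclideanSpace.basisFun_repr] using h
    calc F x = F (∑ i, (x i) • EuclideanSpace.single i (1:ℝ)) := by rw [hdecomp]
      _ ≤ ∑ i, F ((x i) • EuclideanSpace.single i (1:ℝ)) := hFsum _ _
      _ = ∑ i, |x i| * F (EuclideanSpace.single i (1:ℝ)) := by
          apply Finset.sum_congr rfl
          intro i _
          rw [hhom]
      _ ≤ ∑ i, ‖x‖ * F (EuclideanSpace.single i (1:ℝ)) := by
          apply Finset.sum_le_sum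
          intro i _
          exact mul_le_mul_of_nonneg_right (abs_coord_le_norm x i) (hF0 _)
      _ = C₀ * ‖x‖ := by
          rw [← Finset.mul_sum, hC₀def, mul_comm]
      _ ≤ (C₀ + 1) * ‖x‖ := by
          apply mul_le_mul_of_nonneg_right _ (norm_nonneg x)
          linarith
  refine ⟨C₀ + 1, by linarith, hbound, ?_⟩
  have hlip : LipschitzWith (C₀+1).toNNReal F := by
    apply LipschitzWith.of_dist_le_mul
    intro x y
    rw [Real.dist_eq, Real.coe_toNNReal _ (by linarith : (0:ℝ) ≤ C₀+1), dist_eq_norm]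
    rw [abs_sub_le_iff]
    constructor
    · have h1 : F x ≤ F y + F (x - y) := by
        have := Fsub hconv hhom y (x - y)
        simpa using this
      have := hbound (x - y)
      linarith
    · have h1 : F y ≤ F x + F (y - x) := by
        have := Fsub hconv hhom x (y - x)
        simpa using this
      have h2 := hbound (y - x)
      rw [norm_sub_rev] at h2
      linarith
  exact hlip.continuous

lemma frontier_nonempty' {n : ℕ} (hn : 2 ≤ n) {Ω : Set (EuclideanSpace ℝ (Fin n))}
    (hbd : Bornology.IsBounded Ω) (hop : IsOpen Ω) (hconvΩ : Convex ℝ Ω)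
    (h0 : (0 : EuclideanSpace ℝ (Fin n)) ∈ Ω) : ∃ z, z ∈ frontier Ω := by
  have hnhds : Ω ∈ nhds (0:EuclideanSpace ℝ (Fin n)) := hop.mem_nhds h0
  obtain ⟨R', hR', hΩR, hglb⟩ := gauge_lb hbd hop h0
  set e : EuclideanSpace ℝ (Fin n) := EuclideanSpace.single (⟨0, by omega⟩ : Fin n) (1:ℝ) with hedef
  have hnorme : ‖e‖ = 1 := by rw [hedef, EuclideanSpace.norm_single]; norm_num
  have gcont : Continuous (gauge Ω) := continuous_gauge hconvΩ hnhds
  set ψ : ℝ → ℝ := fun t => gauge Ω (t • e) with hψdef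
  have hψcont : ContinuousOn ψ (Set.Icc 0 (2*R')) :=
    (gcont.comp (continuous_id.smul continuous_const)).continuousOn
  have hψ0 : ψ 0 = 0 := by rw [hψdef]; simp [gauge_zero]
  have hψ1 : 1 ≤ ψ (2*R') := by
    have h1 := hglb ((2*R') • e)
    have h2 : ‖(2*R') • e‖ = 2*R' := by
      rw [norm_smul, hnorme, mul_one, Real.norm_eq_abs, abs_of_pos (by positivity)]
    rw [h2] at h1
    have h3 : (2*R')/R' = 2 := by field_simp
    rw [h3] at h1
    rw [hψdef]
    linarith
  have h1mem : (1:ℝ) ∈ Set.Icc (ψ 0) (ψ (2*R')) := by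
    rw [hψ0]; exact ⟨by norm_num, hψ1⟩
  obtain ⟨t, -, ht⟩ := intermediate_value_Icc (by positivity : (0:ℝ) ≤ 2*R') hψcont h1mem
  exact ⟨t • e, (gauge_eq_one_iff_mem_frontier hconvΩ hnhds).1 ht⟩

theorem momentum_perimeter_ratio_le_rmax (n : ℕ) (hn : 2 ≤ n)
    (Ω : Set (EuclideanSpace ℝ (Fin n)))
    (hbd : Bornology.IsBounded Ω) (hop : IsOpen Ω) (hconvΩ : Convex ℝ Ω)
    (h0 : (0 : EuclideanSpace ℝ (Fin n)) ∈ Ω)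
    (ν : EuclideanSpace ℝ (Fin n) → EuclideanSpace ℝ (Fin n))
    (hνmeas : Measurable ν)
    (hνunit : ∀ x ∈ frontier Ω, ‖ν x‖ = 1)
    (F : EuclideanSpace ℝ (Fin n) → ℝ) (a : ℝ) (ha : 0 < a)
    (hF0 : ∀ ξ, 0 ≤ F ξ)
    (hconv : ConvexOn ℝ Set.univ F)
    (hhom : ∀ (t : ℝ) (ξ : EuclideanSpace ℝ (Fin n)), F (t • ξ) = |t| * F ξ)
    (hlow : ∀ ξ, a * ‖ξ‖ ≤ F ξ)
    (p : ℝ) (hp : 1 < p) :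
    (∫ x in frontier Ω, (polar F x) ^ p * F (ν x) ∂(μH[(n : ℝ) - 1])) /
      (∫ x in frontier Ω, F (ν x) ∂(μH[(n : ℝ) - 1])) ≤
      (sSup (polar F '' closure Ω)) ^ p ∧
    ((∫ x in frontier Ω, (polar F x) ^ p * F (ν x) ∂(μH[(n : ℝ) - 1])) /
      (∫ x in frontier Ω, F (ν x) ∂(μH[(n : ℝ) - 1])) =
      (sSup (polar F '' closure Ω)) ^ p ↔
      ∃ r : ℝ, 0 < r ∧ Ω = {ξ : EuclideanSpace ℝ (Fin n) | polar F ξ < r}) := by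
  classical
  haveI hnonempty : Nonempty {ξ : EuclideanSpace ℝ (Fin n) // ξ ≠ 0} := by
    refine ⟨⟨EuclideanSpace.single (⟨0, by omega⟩ : Fin n) (1:ℝ), ?_⟩⟩
    intro h
    have h2 := congrArg norm h
    rw [EuclideanSpace.norm_single] at h2
    norm_num at h2
  have hp0 : (0:ℝ) < p := by linarith
  have hnhds : Ω ∈ nhds (0 : EuclideanSpace ℝ (Fin n)) := hop.mem_nhds h0
  obtain ⟨R', hR', hΩR, hglb⟩ := gauge_lb hbd hop h0
  have gpos : ∀ {x : EuclideanSpace ℝ (Fin n)}, x ≠ 0 → 0 < gauge Ω x := by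
    intro x hx
    exact lt_of_lt_of_le (div_pos (norm_pos_iff.2 hx) hR') (hglb x)
  set μ : Measure (EuclideanSpace ℝ (Fin n)) := μH[(n:ℝ)-1].restrict (frontier Ω) with hμdef
  have hfrM : MeasurableSet (frontier Ω) := isClosed_frontier.measurableSet
  haveI : IsFiniteMeasure μ := ⟨by
    rw [hμdef, Measure.restrict_apply_univ]
    exact frontier_fin_measure n hn Ω hbd hop hconvΩ h0⟩
  obtain ⟨z₀, hz₀⟩ := frontier_nonempty' hn hbd hop hconvΩ h0
  have hμpos : 0 < μH[(n:ℝ)-1] (frontier Ω) := by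
    have h := frontier_local_pos n hn Ω hbd hop hconvΩ h0 isOpen_univ hz₀ (Set.mem_univ z₀)
    simpa using h
  have pc : Continuous (polar F) := polar_continuous ha hlow
  obtain ⟨C, hC, hFle, Fcont⟩ := F_norm_bound (by omega) hF0 hconv hhom
  -- bounds for polar on the closure
  have hclbd : closure Ω ⊆ Metric.closedBall 0 R' := by
    have h1 : closure Ω ⊆ closure (Metric.ball 0 R') := closure_mono hΩR
    exact h1.trans Metric.closure_ball_subset_closedBall
  have hbddc : BddAbove (polar F '' closure Ω) := by
    refine ⟨R'/a, ?_⟩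
    rintro - ⟨x, hx, rfl⟩
    have hxR : ‖x‖ ≤ R' := by
      have := hclbd hx
      rwa [Metric.mem_closedBall, dist_zero_right] at this
    calc polar F x ≤ ‖x‖ / a := polar_le ha hlow x
      _ ≤ R'/a := by gcongr
  have hne0 : (polar F '' closure Ω).Nonempty :=
    ⟨polar F 0, Set.mem_image_of_mem _ (subset_closure h0)⟩
  set R : ℝ := sSup (polar F '' closure Ω) with hRdef
  have hRub : ∀ x ∈ closure Ω, polar F x ≤ R := fun x hx =>
    le_csSup hbddc (Set.mem_image_of_mem _ hx)
  have hR0 : 0 < R := by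
    obtain ⟨ε, hε, hball⟩ := Metric.mem_nhds_iff.1 hnhds
    set e : EuclideanSpace ℝ (Fin n) := EuclideanSpace.single (⟨0, by omega⟩ : Fin n) (1:ℝ) with hedef
    have hnorme : ‖e‖ = 1 := by rw [hedef, EuclideanSpace.norm_single]; norm_num
    have he0 : e ≠ 0 := by
      intro h; rw [h] at hnorme; simp at hnorme
    have hx₀ : (ε/2) • e ∈ Ω := by
      apply hball
      rw [Metric.mem_ball, dist_zero_right, norm_smul, hnorme, mul_one, Real.norm_eq_abs,
        abs_of_pos (by positivity)]
      linarith
    have hx₀0 : (ε/2) • e ≠ 0 := by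
      apply smul_ne_zero (by positivity : (ε/2:ℝ) ≠ 0) he0
    calc (0:ℝ) < polar F ((ε/2) • e) := polar_pos ha hlow hx₀0
      _ ≤ R := hRub _ (subset_closure hx₀)
  -- measurable / integrable
  have hmeas1 : AEStronglyMeasurable (fun x => F (ν x)) μ :=
    (Fcont.measurable.comp hνmeas).aestronglyMeasurable
  have hmeas2 : AEStronglyMeasurable (fun x => polar F x ^ p * F (ν x)) μ := by
    apply Measurable.aestronglyMeasurable
    exact ((pc.rpow_const (fun x => Or.inr hp0.le)).measurable).mul
      (Fcont.measurable.comp hνmeas)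
  have haefr : ∀ᵐ x ∂μ, x ∈ frontier Ω := ae_restrict_mem hfrM
  have hInt2 : Integrable (fun x => F (ν x)) μ := by
    apply Integrable.mono' (integrable_const C) hmeas1
    filter_upwards [haefr] with x hx
    rw [Real.norm_eq_abs, abs_of_nonneg (hF0 _)]
    calc F (ν x) ≤ C * ‖ν x‖ := hFle _
      _ = C := by rw [hνunit x hx, mul_one]
  have hbnd : ∀ᵐ x ∂μ, polar F x ^ p * F (ν x) ≤ R ^ p * F (ν x) := by
    filter_upwards [haefr] with x hx
    apply mul_le_mul_of_nonneg_right _ (hF0 _)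
    exact Real.rpow_le_rpow (polar_nonneg ha hlow hhom x)
      (hRub x (frontier_subset_closure hx)) hp0.le
  have hInt1 : Integrable (fun x => polar F x ^ p * F (ν x)) μ := by
    apply Integrable.mono' (hInt2.const_mul (R^p)) hmeas2
    filter_upwards [hbnd] with x hx
    rw [Real.norm_eq_abs, abs_of_nonneg]
    · exact hx
    · apply mul_nonneg _ (hF0 _)
      exact Real.rpow_nonneg (polar_nonneg ha hlow hhom x) p
  set D : ℝ := ∫ x in frontier Ω, F (ν x) ∂(μH[(n : ℝ) - 1]) with hDdef
  set N : ℝ := ∫ x in frontier Ω, (polar F x) ^ p * F (ν x) ∂(μH[(n : ℝ) - 1]) with hNdef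
  have hDa : a * (μ Set.univ).toReal ≤ D := by
    have h1 : ∫ _x, (a:ℝ) ∂μ ≤ ∫ x, F (ν x) ∂μ := by
      apply integral_mono_ae (integrable_const a) hInt2
      filter_upwards [haefr] with x hx
      calc a = a * ‖ν x‖ := by rw [hνunit x hx, mul_one]
        _ ≤ F (ν x) := hlow _
    rw [integral_const, smul_eq_mul, mul_comm] at h1
    exact h1
  have hμu : 0 < (μ Set.univ).toReal := by
    apply ENNReal.toReal_pos
    · rw [hμdef, Measure.restrict_apply_univ]
      exact hμpos.ne'
    · rw [hμdef, Measure.restrict_apply_univ]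
      exact (frontier_fin_measure n hn Ω hbd hop hconvΩ h0).ne
  have hD0 : 0 < D := lt_of_lt_of_le (by positivity) hDa
  have hND : N ≤ R ^ p * D := by
    calc N ≤ ∫ x, R^p * F (ν x) ∂μ := integral_mono_ae hInt1 (hInt2.const_mul _) hbnd
      _ = R^p * D := by rw [integral_const_mul]
  constructor
  · rw [div_le_iff₀ hD0]
    exact hND
  constructor
  · -- equality → Wulff shape
    intro heq
    have hNeq : N = R ^ p * D := by
      have : N / D * D = N := div_mul_cancel₀ N hD0.ne'
      rw [← this, heq]
    have hzero : ∫ x, (R^p * F (ν x) - polar F x ^ p * F (ν x)) ∂μ = 0 := by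
      rw [integral_sub (hInt2.const_mul _) hInt1, integral_const_mul]
      have hDD : (∫ x, F (ν x) ∂μ) = D := rfl
      have hNN : (∫ x, polar F x ^ p * F (ν x) ∂μ) = N := rfl
      rw [hDD, hNN, hNeq, sub_self]
    have hae0 : (fun x => R^p * F (ν x) - polar F x ^ p * F (ν x)) =ᵐ[μ] 0 := by
      apply (integral_eq_zero_iff_of_nonneg_ae _ ((hInt2.const_mul _).sub hInt1)).1 hzero
      filter_upwards [hbnd] with x hx
      simp only [Pi.zero_apply, Pi.sub_apply]
      linarith
    have haeR : ∀ᵐ x ∂(μH[(n:ℝ)-1]), x ∈ frontier Ω → polar F x = R := by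
      rw [← ae_restrict_iff' hfrM]
      filter_upwards [hae0, haefr] with x h1 h2
      have hFνpos : 0 < F (ν x) := by
        have := hlow (ν x)
        rw [hνunit x h2, mul_one] at this
        linarith
      have hfac : (R^p - polar F x ^ p) * F (ν x) = 0 := by
        have h1' : R^p * F (ν x) - polar F x ^ p * F (ν x) = 0 := h1
        ring_nf
        ring_nf at h1'
        linarith
      have heqp : polar F x ^ p = R ^ p := by
        rcases mul_eq_zero.1 hfac with h | h
        · linarith
        · exact absurd h hFνpos.ne'
      calc polar F x = (polar F x ^ p) ^ p⁻¹ :=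
            (Real.rpow_rpow_inv (polar_nonneg ha hlow hhom x) hp0.ne').symm
        _ = (R ^ p) ^ p⁻¹ := by rw [heqp]
        _ = R := Real.rpow_rpow_inv hR0.le hp0.ne'
    have hfrR : ∀ z ∈ frontier Ω, polar F z = R := by
      by_contra hcon
      push_neg at hcon
      obtain ⟨z, hzf, hzne⟩ := hcon
      have hzlt : polar F z < R :=
        lt_of_le_of_ne (hRub z (frontier_subset_closure hzf)) hzne
      have hVopen : IsOpen {x : EuclideanSpace ℝ (Fin n) | polar F x < R} :=
        isOpen_lt pc continuous_const
      have hpos := frontier_local_pos n hn Ω hbd hop hconvΩ h0 hVopen hzf hzlt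
      have hnull : μH[(n:ℝ)-1] (frontier Ω ∩ {x | polar F x < R}) = 0 := by
        apply measure_mono_null _ (ae_iff.1 haeR)
        rintro x ⟨hx1, hx2⟩
        intro hcontra
        exact absurd (hcontra hx1) (ne_of_lt hx2)
      rw [hnull] at hpos
      exact lt_irrefl 0 hpos
    -- geometry: Ω = {polar < R}
    refine ⟨R, hR0, ?_⟩
    have hkey : ∀ x : EuclideanSpace ℝ (Fin n), x ≠ 0 → polar F x = gauge Ω x * R := by
      intro x hx
      have hgx := gpos hx
      have hb : gauge Ω ((gauge Ω x)⁻¹ • x) = 1 := by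
        rw [gauge_smul_of_nonneg (inv_nonneg.2 hgx.le), smul_eq_mul]
        exact inv_mul_cancel₀ hgx.ne'
      have hbfr : (gauge Ω x)⁻¹ • x ∈ frontier Ω :=
        (gauge_eq_one_iff_mem_frontier hconvΩ hnhds).1 hb
      have h2 : polar F ((gauge Ω x)⁻¹ • x) = R := hfrR _ hbfr
      rw [polar_smul ha hlow (inv_nonneg.2 hgx.le)] at h2
      have h4 : polar F x = gauge Ω x * R := by
        rw [← h2]
        field_simp
      exact h4
    ext x
    by_cases hx : x = 0
    · subst hx
      simp only [Set.mem_setOf_eq]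
      rw [polar_zero ha hlow]
      exact ⟨fun _ => hR0, fun _ => h0⟩
    · simp only [Set.mem_setOf_eq]
      rw [hkey x hx]
      constructor
      · intro hxΩ
        have : gauge Ω x < 1 := by
          rw [gauge_lt_one_iff_mem_interior hconvΩ hnhds, hop.interior_eq]
          exact hxΩ
        calc gauge Ω x * R < 1 * R := mul_lt_mul_of_pos_right this hR0
          _ = R := one_mul R
      · intro hlt
        have : gauge Ω x < 1 := by
          by_contra hge
          push_neg at hge
          have : R ≤ gauge Ω x * R := le_mul_of_one_le_left hR0.le hge
          linarith
        rw [gauge_lt_one_iff_mem_interior hconvΩ hnhds, hop.interior_eq] at this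
        exact this
  · -- Wulff shape → equality
    rintro ⟨r, hr, hΩeq⟩
    -- R = r
    have hclsub : closure Ω ⊆ {x | polar F x ≤ r} := by
      apply closure_minimal
      · rw [hΩeq]
        intro x hx
        simp only [Set.mem_setOf_eq] at hx ⊢
        exact le_of_lt hx
      · exact isClosed_le pc continuous_const
    have hRler : R ≤ r := by
      apply csSup_le hne0
      rintro - ⟨x, hx, rfl⟩
      exact hclsub hx
    have hRr : R = r := by
      by_contra hne
      have hRlt : R < r := lt_of_le_of_ne hRler hne
      obtain ⟨t, ht1, ht2⟩ := exists_between ((div_lt_one hr).2 hRlt)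
      have ht0 : 0 < t := lt_of_le_of_lt (div_nonneg hR0.le hr.le) ht1
      set e : EuclideanSpace ℝ (Fin n) := EuclideanSpace.single (⟨0, by omega⟩ : Fin n) (1:ℝ) with hedef
      have he0 : e ≠ 0 := by
        intro h
        have h2 := congrArg norm h
        rw [hedef, EuclideanSpace.norm_single] at h2
        norm_num at h2
      have hpe : 0 < polar F e := polar_pos ha hlow he0
      set y : EuclideanSpace ℝ (Fin n) := (t * r / polar F e) • e with hydef
      have hpy : polar F y = t * r := by
        rw [hydef, polar_smul ha hlow (by positivity)]
        field_simp
      have hyΩ : y ∈ Ω := by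
        rw [hΩeq]
        simp only [Set.mem_setOf_eq, hpy]
        calc t * r < 1 * r := by gcongr
          _ = r := one_mul r
      have : t * r ≤ R := by
        rw [← hpy]
        exact hRub _ (subset_closure hyΩ)
      have : R < t * r := (div_lt_iff₀ hr).1 ht1
      linarith
    -- polar = r on frontier
    have hfrr : ∀ x ∈ frontier Ω, polar F x = r := by
      intro x hx
      have h1 : polar F x ≤ r := hclsub (frontier_subset_closure hx)
      have h2 : ¬ (polar F x < r) := by
        intro hlt
        have : x ∈ interior Ω := by
          rw [hop.interior_eq, hΩeq]
          exact hlt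
        exact absurd this hx.2
      linarith [lt_or_ge (polar F x) r]
    have hNr : N = r ^ p * D := by
      have hcong : ∫ x in frontier Ω, (polar F x) ^ p * F (ν x) ∂(μH[(n : ℝ) - 1])
          = ∫ x in frontier Ω, r ^ p * F (ν x) ∂(μH[(n : ℝ) - 1]) := by
        apply setIntegral_congr_fun hfrM
        intro x hx
        dsimp only
        rw [hfrr x hx]
      rw [hNdef, hcong]
      have : (∫ x, r ^ p * F (ν x) ∂μ) = r ^ p * ∫ x, F (ν x) ∂μ := integral_const_mul _ _
      exact this
    rw [hNr, hRr, mul_div_assoc, div_self hD0.ne', mul_one]
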